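/- Let I be an index set, D a filter on I, and G a family of functions from I to a cardinal κ such that (I, D, G) is a good triple (D is maximal such that G is independent mod D). Then the family Fin_s(G) = {A_h : h ∈ Fin(G)} is dense in P(I) modulo D: for every X ⊆ I with X ≠ ∅ mod D there is A_h ∈ Fin_s(G) with A_h ⊆ X mod D. -/
import Mathlib


universe u v

/-- `(I, D, G)` is a pre-good triple: every set `A_h = {t : g t = h g for g ∈ s}`,
for a finite `s ⊆ G` and a choice function `h` with `h g ∈ range g`, is nonempty
modulo `D` (i.e. meets every member of `D`). -/
def PreGoodTriple {I : Type u} {K : Type v} (D : Filter I) (G : Set (I → K)) : Prop :=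
  ∀ s : Finset (I → K), ↑s ⊆ G → ∀ h : (I → K) → K, (∀ g ∈ s, h g ∈ Set.range g) →
    ∀ Y ∈ D, ({t : I | ∀ g ∈ s, g t = h g} ∩ Y).Nonempty

/-- `(I, D, G)` is a good triple: pre-good, and `D` is maximal among filters with
this property (recall that in `Filter`'s order, `D' ≤ D` means `D'` extends `D`). -/
def GoodTriple {I : Type u} {K : Type v} (D : Filter I) (G : Set (I → K)) : Prop :=
  PreGoodTriple D G ∧
    ∀ D' : Filter I, D' ≤ D → PreGoodTriple D' G → D' = D

/-- If `(I, D, G)` is a good triple then `Fin_s(G)` is dense in `𝒫(I)` modulo `D`: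
for every `X ⊆ I` which is nonempty mod `D` there are a finite `s ⊆ G` and a choice
function `h` such that `A_h ⊆ X mod D`, i.e. `A_h ∖ X = ∅ mod D`. -/
theorem goodTriple_dense {I : Type u} {K : Type v} (D : Filter I) (G : Set (I → K))
    (hgood : GoodTriple D G) (X : Set I) (hX : ∀ Y ∈ D, (X ∩ Y).Nonempty) :
    ∃ (s : Finset (I → K)) (h : (I → K) → K), ↑s ⊆ G ∧ (∀ g ∈ s, h g ∈ Set.range g) ∧
      ({t : I | ∀ g ∈ s, g t = h g} \ X)ᶜ ∈ D := by
  by_contra hcon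
  push_neg at hcon
  -- Key: every A_h meets Xᶜ ∩ Y for each Y ∈ D
  have key : ∀ s : Finset (I → K), ↑s ⊆ G → ∀ h : (I → K) → K,
      (∀ g ∈ s, h g ∈ Set.range g) → ∀ Y ∈ D,
      (({t : I | ∀ g ∈ s, g t = h g} ∩ Xᶜ) ∩ Y).Nonempty := by
    intro s hs h hh Y hY
    rcases Set.eq_empty_or_nonempty (({t : I | ∀ g ∈ s, g t = h g} ∩ Xᶜ) ∩ Y) with he | hne
    · exfalso
      apply hcon s h hs hh
      have hsub : Y ⊆ ({t : I | ∀ g ∈ s, g t = h g} \ X)ᶜ := by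
        intro t ht hmem
        have : t ∈ ({t : I | ∀ g ∈ s, g t = h g} ∩ Xᶜ) ∩ Y := ⟨⟨hmem.1, hmem.2⟩, ht⟩
        rw [he] at this
        exact this
      exact D.mem_of_superset hY hsub
    · exact hne
  have hpre : PreGoodTriple (D ⊓ Filter.principal Xᶜ) G := by
    intro s hs h hh Y hY
    rw [Filter.mem_inf_iff] at hY
    obtain ⟨Y₁, hY₁, Y₂, hY₂, rfl⟩ := hY
    rw [Filter.mem_principal] at hY₂
    obtain ⟨t, ⟨ht1, ht2⟩, ht3⟩ := key s hs h hh Y₁ hY₁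
    exact ⟨t, ht1, ht3, hY₂ ht2⟩
  have heq := hgood.2 _ inf_le_left hpre
  have hXc : Xᶜ ∈ D := by
    rw [← heq]
    exact Filter.mem_inf_of_right (Filter.mem_principal_self _)
  obtain ⟨t, htX, htXc⟩ := hX Xᶜ hXc
  exact htXc htX
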